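/- With the setup of the ping-pong variant, suppose additionally that ā^n and b̄^n belong to W_{X→K} for every integer |n| ≥ 2. Then every relator of H has an exact subword belonging to 𝒜 \ W_{K→X}, where 𝒜 is the set of nonempty reduced words in F₂ all of whose syllables are ā^{±1} or b̄^{±1}. If furthermore (āb̄)^{±1} and (b̄ā)^{±1} belong to W_{X→K}, then every relator of H has an exact subword in (ℬ ∪ ℬ⁻¹) \ W_{K→X}, where ℬ = {(āb̄⁻¹)^k, (b̄⁻¹ā)^k, (āb̄⁻¹)^{k-1}ā, (b̄⁻¹ā)^{k-1}b̄⁻¹ : k > 0}. -/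

import Mathlib

open Pointwise

/-- A word in the free group `F₂` on two generators (`true` ↦ `ā`, `false` ↦ `b̄`),
presented as its list of syllables `(sᵢ, nᵢ)`, is reduced if consecutive syllables use
distinct generators and all exponents are nonzero. -/
def IsReducedWord (w : List (Bool × ℤ)) : Prop :=
  w.Chain' (fun p q => p.1 ≠ q.1) ∧ ∀ p ∈ w, p.2 ≠ 0

/-- The evaluation of a word `w̄ ∈ F₂` in the group `H = ⟨a, b⟩`. -/
def evalW {H : Type*} [Group H] (a b : H) (w : List (Bool × ℤ)) : H :=
  (w.map fun s => (if s.1 then a else b) ^ s.2).prod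

/-- Membership in `W(C₁, C₂, D₁, D₂)`: the reduced word `w̄` satisfies
`w(C₁) ⊆ D₂` if `w̄ ∈ F₂^{a,a}`, `w(C₂) ⊆ D₂` if `w̄ ∈ F₂^{a,b}`,
`w(C₁) ⊆ D₁` if `w̄ ∈ F₂^{b,a}`, and `w(C₂) ⊆ D₁` if `w̄ ∈ F₂^{b,b}`
(the source is governed by the last letter of `w̄`, which acts first, and the
target by its first letter). -/
def memW {H X : Type*} [Group H] [MulAction H X] (a b : H) (C₁ C₂ D₁ D₂ : Set X)
    (w : List (Bool × ℤ)) : Prop :=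
  IsReducedWord w ∧ ∃ h : w ≠ [],
    evalW a b w • (if (w.getLast h).1 then C₁ else C₂) ⊆ (if (w.head h).1 then D₂ else D₁)

/-- `𝒜`: the set of nonempty reduced words all of whose syllables are `ā^{±1}`, `b̄^{±1}`. -/
def setA : Set (List (Bool × ℤ)) :=
  {w | w ≠ [] ∧ IsReducedWord w ∧ ∀ p ∈ w, p.2 = 1 ∨ p.2 = -1}

/-- `ℬ = {(āb̄⁻¹)^k, (b̄⁻¹ā)^k, (āb̄⁻¹)^{k-1}ā, (b̄⁻¹ā)^{k-1}b̄⁻¹ : k > 0}`. -/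
def setB : Set (List (Bool × ℤ)) :=
  {w | ∃ k : ℕ, 0 < k ∧
    (w = (List.replicate k ([(true, 1), (false, -1)] : List (Bool × ℤ))).flatten ∨
     w = (List.replicate k ([(false, -1), (true, 1)] : List (Bool × ℤ))).flatten ∨
     w = (List.replicate (k - 1) ([(true, 1), (false, -1)] : List (Bool × ℤ))).flatten
          ++ [(true, 1)] ∨
     w = (List.replicate (k - 1) ([(false, -1), (true, 1)] : List (Bool × ℤ))).flatten
          ++ [(false, -1)])}

/-- The formal inverse of a word: reverse the syllables and negate the exponents. -/
def wordInv (w : List (Bool × ℤ)) : List (Bool × ℤ) :=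
  (w.map fun p => (p.1, -p.2)).reverse

-- auxiliary

def srcS {X : Type*} (X₁ X₂ K₁ K₂ : Set X) (τ g : Bool) : Set X :=
  if τ then (if g then X₁ else X₂) else (if g then K₁ else K₂)

def tgtS {X : Type*} (X₁ X₂ K₁ K₂ : Set X) (τ g : Bool) : Set X :=
  if τ then (if g then K₂ else K₁) else (if g then X₂ else X₁)

lemma evalW_append {H : Type*} [Group H] (a b : H) (u v : List (Bool × ℤ)) :
    evalW a b (u ++ v) = evalW a b u * evalW a b v := by
  simp [evalW]

lemma evalW_cons {H : Type*} [Group H] (a b : H) (s : Bool × ℤ) (t : List (Bool × ℤ)) :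
    evalW a b (s :: t) = (if s.1 then a else b) ^ s.2 * evalW a b t := by
  simp [evalW]

lemma IsReducedWord.infix {u v : List (Bool × ℤ)} (h : IsReducedWord v) (hu : u <:+: v) :
    IsReducedWord u :=
  ⟨h.1.infix hu, fun p hp => h.2 p (hu.sublist.subset hp)⟩

lemma inclL {X : Type*} (X₁ X₂ K₁ K₂ : Set X) (hK₁X : K₁ ⊆ X₁) (hK₂X : K₂ ⊆ X₂)
    (τ₁ τ₂ g₁ g₂ : Bool) (hg : g₁ ≠ g₂) (hτ : τ₁ = false → τ₂ = true) :
    tgtS X₁ X₂ K₁ K₂ τ₂ g₂ ⊆ srcS X₁ X₂ K₁ K₂ τ₁ g₁ := by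
  cases τ₁ <;> cases τ₂ <;> cases g₁ <;> cases g₂ <;>
    simp_all [srcS, tgtS, Set.Subset.rfl]

lemma typeL {H X : Type*} [Group H] [MulAction H X] (a b : H) (X₁ X₂ K₁ K₂ : Set X)
    (hK₁X : K₁ ⊆ X₁) (hK₂X : K₂ ⊆ X₂) :
    ∀ (bs : List (List (Bool × ℤ) × Bool)) (p : List (Bool × ℤ) × Bool),
      (∀ q ∈ p :: bs, q.1 ≠ []) →
      IsReducedWord ((p :: bs).map Prod.fst).flatten →
      (∀ q ∈ p :: bs, if q.2 then memW a b X₁ X₂ K₁ K₂ q.1 else memW a b K₁ K₂ X₁ X₂ q.1) →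
      (p :: bs).Chain' (fun r q => r.2 = false → q.2 = true) →
      ∀ pl sf sl, (p :: bs).getLast? = some pl →
        (((p :: bs).map Prod.fst).flatten).head? = some sf →
        (((p :: bs).map Prod.fst).flatten).getLast? = some sl →
        evalW a b (((p :: bs).map Prod.fst).flatten) • srcS X₁ X₂ K₁ K₂ pl.2 sl.1 ⊆
          tgtS X₁ X₂ K₁ K₂ p.2 sf.1 := by
  intro bs
  induction bs with
  | nil =>
    intro p hne hred hmem halt pl sf sl hpl hsf hsl
    have hpl' : p = pl := by simpa using hpl
    subst hpl'
    have hp1 : p.1 ≠ [] := hne p (by simp)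
    simp only [List.map_cons, List.map_nil, List.flatten_cons, List.flatten_nil,
      List.append_nil] at hsf hsl ⊢
    have hsf' : sf = p.1.head hp1 := by
      rw [List.head?_eq_head hp1] at hsf; exact (Option.some_inj.mp hsf).symm
    have hsl' : sl = p.1.getLast hp1 := by
      rw [List.getLast?_eq_getLast_of_ne_nil hp1] at hsl; exact (Option.some_inj.mp hsl).symm
    subst hsf' hsl'
    have hm := hmem p (by simp)
    cases hp2 : p.2 <;> simp only [hp2, Bool.false_eq_true, if_false, if_true] at hm
    · obtain ⟨hr, hn, hsub⟩ := hm
      cases hgl : (p.1.getLast hp1).1 <;> cases hgf : (p.1.head hp1).1 <;>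
        simp only [srcS, tgtS, hgl, hgf, if_true, if_false, Bool.false_eq_true] <;>
        simpa [hgl, hgf] using hsub
    · obtain ⟨hr, hn, hsub⟩ := hm
      cases hgl : (p.1.getLast hp1).1 <;> cases hgf : (p.1.head hp1).1 <;>
        simp only [srcS, tgtS, hgl, hgf, if_true, if_false, Bool.false_eq_true] <;>
        simpa [hgl, hgf] using hsub
  | cons q bs' ih =>
    intro p hne hred hmem halt pl sf sl hpl hsf hsl
    have hp1 : p.1 ≠ [] := hne p (by simp)
    have hq1 : q.1 ≠ [] := hne q (by simp)
    have hV'ne : ((q :: bs').map Prod.fst).flatten ≠ [] := by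
      simp only [List.map_cons, List.flatten_cons]
      exact fun h => hq1 (List.append_eq_nil_iff.mp h).1
    have hflat : ((p :: q :: bs').map Prod.fst).flatten
        = p.1 ++ ((q :: bs').map Prod.fst).flatten := by
      simp [List.flatten_cons]
    rw [hflat] at hred hsf hsl ⊢
    -- heads and lasts
    have hsf' : sf = p.1.head hp1 := by
      rw [List.head?_append_of_ne_nil _ hp1, List.head?_eq_head hp1] at hsf
      exact (Option.some_inj.mp hsf).symm
    have hslV : (((q :: bs').map Prod.fst).flatten).getLast? = some sl := by
      rw [List.getLast?_append_of_ne_nil _ hV'ne] at hsl; exact hsl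
    have hsq : (((q :: bs').map Prod.fst).flatten).head? = some (q.1.head hq1) := by
      simp only [List.map_cons, List.flatten_cons]
      rw [List.head?_append_of_ne_nil _ hq1, List.head?_eq_head hq1]
    have hpl' : (q :: bs').getLast? = some pl := by
      rw [List.getLast?_cons_cons] at hpl; exact hpl
    -- sub reducedness
    have hredV' : IsReducedWord (((q :: bs').map Prod.fst).flatten) :=
      hred.infix ⟨p.1, [], by simp⟩
    have IH := ih q (fun r hr => hne r (List.mem_cons_of_mem _ hr)) hredV'
      (fun r hr => hmem r (List.mem_cons_of_mem _ hr)) halt.tail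
      pl (q.1.head hq1) sl hpl' hsq hslV
    -- junction generator inequality
    have hjun : (p.1.getLast hp1).1 ≠ (q.1.head hq1).1 := by
      have hc := (List.isChain_append.mp hred.1).2.2
      exact hc _ (by rw [List.getLast?_eq_getLast_of_ne_nil hp1]; rfl) _ hsq
    -- alternation between p and q
    have haltpq : p.2 = false → q.2 = true :=
      (List.isChain_cons.mp halt).1 q rfl
    -- membership of p
    have hm := hmem p (by simp)
    have hsrc : evalW a b p.1 • srcS X₁ X₂ K₁ K₂ p.2 (p.1.getLast hp1).1
        ⊆ tgtS X₁ X₂ K₁ K₂ p.2 (p.1.head hp1).1 := by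
      cases hp2 : p.2 <;> simp only [hp2, Bool.false_eq_true, if_false, if_true] at hm <;>
        obtain ⟨hr, hn, hsub⟩ := hm
      · cases hgl : (p.1.getLast hp1).1 <;> cases hgf : (p.1.head hp1).1 <;>
          simp only [srcS, tgtS, hgl, hgf, if_true, if_false, Bool.false_eq_true] <;>
          simpa [hgl, hgf] using hsub
      · cases hgl : (p.1.getLast hp1).1 <;> cases hgf : (p.1.head hp1).1 <;>
          simp only [srcS, tgtS, hgl, hgf, if_true, if_false, Bool.false_eq_true] <;>
          simpa [hgl, hgf] using hsub
    have hincl : tgtS X₁ X₂ K₁ K₂ q.2 (q.1.head hq1).1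
        ⊆ srcS X₁ X₂ K₁ K₂ p.2 (p.1.getLast hp1).1 :=
      inclL X₁ X₂ K₁ K₂ hK₁X hK₂X _ _ _ _ hjun haltpq
    rw [hsf', evalW_append, ← smul_smul]
    calc evalW a b p.1 • evalW a b (((q :: bs').map Prod.fst).flatten) •
            srcS X₁ X₂ K₁ K₂ pl.2 sl.1
        ⊆ evalW a b p.1 • tgtS X₁ X₂ K₁ K₂ q.2 (q.1.head hq1).1 := Set.smul_set_mono IH
      _ ⊆ evalW a b p.1 • srcS X₁ X₂ K₁ K₂ p.2 (p.1.getLast hp1).1 := Set.smul_set_mono hincl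
      _ ⊆ tgtS X₁ X₂ K₁ K₂ p.2 (p.1.head hp1).1 := hsrc

lemma exist1 : ∀ (v : List (Bool × ℤ)), v ≠ [] → (∀ s ∈ v, s.2 ≠ 0) →
    ∃ bs : List (List (Bool × ℤ) × Bool), bs ≠ [] ∧ (bs.map Prod.fst).flatten = v ∧
      (∀ p ∈ bs, p.1 ≠ []) ∧ bs.Chain' (fun r q => r.2 = false → q.2 = true) ∧
      ∀ p ∈ bs, (p.2 = true → ∃ g n, p.1 = [(g, n)] ∧ 2 ≤ |n|) ∧
                (p.2 = false → ∀ s ∈ p.1, s.2 = 1 ∨ s.2 = -1) := by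
  intro v
  induction v with
  | nil => intro h; exact absurd rfl h
  | cons s t ihv =>
    intro _ hnz
    by_cases hbig : 2 ≤ |s.2|
    · rcases eq_or_ne t [] with rfl | ht
      · refine ⟨[([s], true)], by simp, by simp, by simp, List.isChain_singleton _, ?_⟩
        intro p hp; simp only [List.mem_singleton] at hp; subst hp
        exact ⟨fun _ => ⟨s.1, s.2, by simp, hbig⟩, fun h => by simp at h⟩
      · obtain ⟨bs', hne', hflat', hbne', hchain', hspec'⟩ :=
          ihv ht (fun x hx => hnz x (by simp [hx]))
        refine ⟨([s], true) :: bs', by simp, ?_, ?_, ?_, ?_⟩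
        · simp [hflat']
        · intro p hp
          rcases List.mem_cons.mp hp with rfl | hp
          · simp
          · exact hbne' p hp
        · exact List.isChain_cons.mpr ⟨fun y _ => by simp, hchain'⟩
        · intro p hp
          rcases List.mem_cons.mp hp with rfl | hp
          · exact ⟨fun _ => ⟨s.1, s.2, by simp, hbig⟩, fun h => by simp at h⟩
          · exact hspec' p hp
    · have hsm : s.2 = 1 ∨ s.2 = -1 := by
        have h0 := hnz s (by simp)
        rcases abs_cases s.2 with ⟨h1, _⟩ | ⟨h1, _⟩ <;> rw [h1] at hbig <;> omega
      rcases eq_or_ne t [] with rfl | ht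
      · refine ⟨[([s], false)], by simp, by simp, by simp, List.isChain_singleton _, ?_⟩
        intro p hp; simp only [List.mem_singleton] at hp; subst hp
        refine ⟨fun h => by simp at h, fun _ u hu => ?_⟩
        rw [List.mem_singleton.mp hu]; exact hsm
      · obtain ⟨bs', hne', hflat', hbne', hchain', hspec'⟩ :=
          ihv ht (fun x hx => hnz x (by simp [hx]))
        rcases bs' with _ | ⟨⟨B, τ⟩, tail⟩
        · exact absurd rfl hne'
        cases τ
        · -- merge with following small block
          refine ⟨((s :: B), false) :: tail, by simp, ?_, ?_, ?_, ?_⟩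
          · simp only [List.map_cons, List.flatten_cons] at hflat' ⊢
            rw [List.cons_append, hflat']
          · intro p hp
            rcases List.mem_cons.mp hp with rfl | hp
            · simp
            · exact hbne' p (List.mem_cons_of_mem _ hp)
          · have h := List.isChain_cons.mp hchain'
            exact List.isChain_cons.mpr ⟨h.1, h.2⟩
          · intro p hp
            rcases List.mem_cons.mp hp with rfl | hp
            · refine ⟨fun h => by simp at h, fun _ u hu => ?_⟩
              rcases List.mem_cons.mp hu with rfl | hu
              · exact hsm
              · exact ((hspec' (B, false) (by simp)).2 rfl) u hu
            · exact hspec' p (List.mem_cons_of_mem _ hp)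
        · -- prepend as its own small block
          refine ⟨([s], false) :: ((B, true) :: tail), by simp, ?_, ?_, ?_, ?_⟩
          · simp only [List.map_cons, List.flatten_cons] at hflat' ⊢
            rw [hflat']; rfl
          · intro p hp
            rcases List.mem_cons.mp hp with rfl | hp
            · simp
            · exact hbne' p hp
          · exact List.isChain_cons.mpr ⟨fun y hy => by simp at hy; simp [← hy], hchain'⟩
          · intro p hp
            rcases List.mem_cons.mp hp with rfl | hp
            · refine ⟨fun h => by simp at h, fun _ u hu => ?_⟩
              rw [List.mem_singleton.mp hu]; exact hsm
            · exact hspec' p hp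

lemma exist2 : ∀ (n : ℕ) (v : List (Bool × ℤ)), v.length ≤ n → v ≠ [] → IsReducedWord v →
    ∃ bs : List (List (Bool × ℤ) × Bool), bs ≠ [] ∧ (bs.map Prod.fst).flatten = v ∧
      (∀ p ∈ bs, p.1 ≠ []) ∧ bs.Chain' (fun r q => r.2 = false → q.2 = true) ∧
      ∀ p ∈ bs, (p.2 = true → (∃ g m, p.1 = [(g, m)] ∧ 2 ≤ |m|) ∨
                   (∃ g e, p.1 = [(g, e), (!g, e)] ∧ (e = 1 ∨ e = -1))) ∧
                (p.2 = false → (∀ s ∈ p.1, s.2 = 1 ∨ s.2 = -1) ∧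
                   p.1.Chain' (fun r u => u.2 = -r.2)) := by
  intro n
  induction n with
  | zero =>
    intro v hl hv _
    exact absurd (List.length_eq_zero_iff.mp (Nat.le_zero.mp hl)) hv
  | succ n ihn =>
    intro v hl hv hred
    obtain ⟨s, t, rfl⟩ : ∃ s t, v = s :: t := by
      cases v with
      | nil => exact absurd rfl hv
      | cons s t => exact ⟨s, t, rfl⟩
    have hredt : IsReducedWord t := hred.infix ⟨[s], [], by simp⟩
    have hlt : t.length ≤ n := by simpa using hl
    by_cases hbig : 2 ≤ |s.2|
    · rcases eq_or_ne t [] with rfl | ht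
      · refine ⟨[([s], true)], by simp, by simp, by simp, List.isChain_singleton _, ?_⟩
        intro p hp; simp only [List.mem_singleton] at hp; subst hp
        exact ⟨fun _ => Or.inl ⟨s.1, s.2, by simp, hbig⟩, fun h => by simp at h⟩
      · obtain ⟨bs', hne', hflat', hbne', hchain', hspec'⟩ := ihn t hlt ht hredt
        refine ⟨([s], true) :: bs', by simp, by simp [hflat'], ?_, ?_, ?_⟩
        · intro p hp
          rcases List.mem_cons.mp hp with rfl | hp
          · simp
          · exact hbne' p hp
        · exact List.isChain_cons.mpr ⟨fun y _ => by simp, hchain'⟩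
        · intro p hp
          rcases List.mem_cons.mp hp with rfl | hp
          · exact ⟨fun _ => Or.inl ⟨s.1, s.2, by simp, hbig⟩, fun h => by simp at h⟩
          · exact hspec' p hp
    · have hsm : s.2 = 1 ∨ s.2 = -1 := by
        have h0 := hred.2 s (by simp)
        rcases abs_cases s.2 with ⟨h1, _⟩ | ⟨h1, _⟩ <;> rw [h1] at hbig <;> omega
      rcases t with _ | ⟨u, t'⟩
      · refine ⟨[([s], false)], by simp, by simp, by simp, List.isChain_singleton _, ?_⟩
        intro p hp; simp only [List.mem_singleton] at hp; subst hp
        refine ⟨fun h => by simp at h, fun _ => ⟨fun x hx => ?_, List.isChain_singleton _⟩⟩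
        rw [List.mem_singleton.mp hx]; exact hsm
      · have hgen : s.1 ≠ u.1 := (List.isChain_cons.mp hred.1).1 u rfl
        have hu1 : u.1 = !s.1 := by
          revert hgen; cases s.1 <;> cases u.1 <;> simp
        by_cases hequ : s.2 = u.2
        · -- pair block [s, u] ∈ W_{X→K}
          have hupair : u = (!s.1, s.2) := by
            rw [Prod.ext_iff]; exact ⟨hu1, hequ.symm⟩
          have hpairspec : ∀ (τtrue : True), (∃ g m, ([s, u] : List (Bool × ℤ)) = [(g, m)] ∧ 2 ≤ |m|) ∨
              (∃ g e, ([s, u] : List (Bool × ℤ)) = [(g, e), (!g, e)] ∧ (e = 1 ∨ e = -1)) :=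
            fun _ => Or.inr ⟨s.1, s.2, by rw [← hupair], hsm⟩
          rcases eq_or_ne t' [] with rfl | ht'
          · refine ⟨[([s, u], true)], by simp, by simp, by simp, List.isChain_singleton _, ?_⟩
            intro p hp; simp only [List.mem_singleton] at hp; subst hp
            exact ⟨fun _ => hpairspec trivial, fun h => by simp at h⟩
          · have hredt' : IsReducedWord t' := hredt.infix ⟨[u], [], by simp⟩
            have hlt' : t'.length ≤ n := by simp only [List.length_cons] at hl; omega
            obtain ⟨bs', hne', hflat', hbne', hchain', hspec'⟩ := ihn t' hlt' ht' hredt'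
            refine ⟨([s, u], true) :: bs', by simp, by simp [hflat'], ?_, ?_, ?_⟩
            · intro p hp
              rcases List.mem_cons.mp hp with rfl | hp
              · simp
              · exact hbne' p hp
            · exact List.isChain_cons.mpr ⟨fun y _ => by simp, hchain'⟩
            · intro p hp
              rcases List.mem_cons.mp hp with rfl | hp
              · exact ⟨fun _ => hpairspec trivial, fun h => by simp at h⟩
              · exact hspec' p hp
        · -- s flips sign with u (if u is small) : merge or prepend
          obtain ⟨bs', hne', hflat', hbne', hchain', hspec'⟩ :=
            ihn (u :: t') hlt (by simp) hredt
          rcases bs' with _ | ⟨⟨B, τ⟩, tail⟩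
          · exact absurd rfl hne'
          cases τ
          · -- merge: head block is a flip block starting with u
            obtain ⟨B', rfl⟩ : ∃ B', B = u :: B' := by
              rcases B with _ | ⟨b0, B'⟩
              · exact absurd rfl (hbne' ([], false) (by simp))
              · simp only [List.map_cons, List.flatten_cons, List.cons_append,
                  List.cons.injEq] at hflat'
                exact ⟨B', by rw [hflat'.1]⟩
            have hBspec := (hspec' (u :: B', false) (by simp)).2 rfl
            have huflip : u.2 = -s.2 := by
              have hupm := hBspec.1 u (by simp)
              omega
            refine ⟨((s :: u :: B'), false) :: tail, by simp, ?_, ?_, ?_, ?_⟩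
            · simp only [List.map_cons, List.flatten_cons] at hflat' ⊢
              rw [List.cons_append, hflat']
            · intro p hp
              rcases List.mem_cons.mp hp with rfl | hp
              · simp
              · exact hbne' p (List.mem_cons_of_mem _ hp)
            · have h := List.isChain_cons.mp hchain'
              exact List.isChain_cons.mpr ⟨h.1, h.2⟩
            · intro p hp
              rcases List.mem_cons.mp hp with rfl | hp
              · refine ⟨fun h => by simp at h, fun _ => ⟨?_, ?_⟩⟩
                · intro x hx
                  rcases List.mem_cons.mp hx with rfl | hx
                  · exact hsm
                  · exact hBspec.1 x hx
                · exact List.isChain_cons.mpr ⟨fun y hy => by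
                    simp only [List.head?_cons, Option.mem_def, Option.some_inj] at hy
                    rw [← hy]; exact huflip, hBspec.2⟩
              · exact hspec' p (List.mem_cons_of_mem _ hp)
          · -- prepend small singleton before an XK block
            refine ⟨([s], false) :: ((B, true) :: tail), by simp, ?_, ?_, ?_, ?_⟩
            · simp only [List.map_cons, List.flatten_cons] at hflat' ⊢
              rw [hflat']; rfl
            · intro p hp
              rcases List.mem_cons.mp hp with rfl | hp
              · simp
              · exact hbne' p hp
            · exact List.isChain_cons.mpr ⟨fun y hy => by simp at hy; simp [← hy], hchain'⟩
            · intro p hp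
              rcases List.mem_cons.mp hp with rfl | hp
              · refine ⟨fun h => by simp at h, fun _ => ⟨fun x hx => ?_, List.isChain_singleton _⟩⟩
                rw [List.mem_singleton.mp hx]; exact hsm
              · exact hspec' p hp

lemma rotL (c d : Bool × ℤ) : ∀ k : ℕ,
    c :: (List.replicate k [d, c]).flatten = (List.replicate k [c, d]).flatten ++ [c] := by
  intro k
  induction k with
  | zero => simp
  | succ k ih =>
    rw [List.replicate_succ, List.flatten_cons, List.replicate_succ, List.flatten_cons]
    simp only [List.cons_append, List.append_assoc]
    rw [← ih]
    rfl

lemma flatten_rep_succ (c d : Bool × ℤ) (k : ℕ) :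
    (List.replicate k [c, d]).flatten ++ [c, d] = (List.replicate (k+1) [c, d]).flatten := by
  rw [List.replicate_succ', List.flatten_append]
  simp

lemma L2 : ∀ (t : List (Bool × ℤ)) (s : Bool × ℤ),
    (s :: t).Chain' (fun p q => p.1 ≠ q.1) →
    (s :: t).Chain' (fun p q => q.2 = -p.2) →
    (s = (true, 1) ∨ s = (false, -1)) → (s :: t) ∈ setB := by
  intro t
  induction t with
  | nil =>
    intro s _ _ hs
    rcases hs with rfl | rfl
    · exact ⟨1, one_pos, Or.inr (Or.inr (Or.inl (by simp)))⟩
    · exact ⟨1, one_pos, Or.inr (Or.inr (Or.inr (by simp)))⟩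
  | cons u t' ih =>
    intro s hg hf hs
    have hgen : s.1 ≠ u.1 := (List.isChain_cons.mp hg).1 u rfl
    have hfl : u.2 = -s.2 := (List.isChain_cons.mp hf).1 u rfl
    rcases hs with rfl | rfl
    · have hu : u = (false, -1) := by
        rw [Prod.ext_iff]
        constructor
        · revert hgen; cases u.1 <;> simp
        · simpa using hfl
      obtain ⟨k, hk, hform⟩ := ih u hg.tail hf.tail (Or.inr hu)
      rcases hform with h | h | h | h
      · exfalso
        rw [hu] at h
        cases k with
        | zero => omega
        | succ k' =>
          rw [List.replicate_succ, List.flatten_cons] at h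
          simp at h
      · refine ⟨k + 1, by omega, Or.inr (Or.inr (Or.inl ?_))⟩
        simp only [Nat.add_sub_cancel]
        rw [h, rotL]
      · exfalso
        rw [hu] at h
        cases hk1 : k - 1 with
        | zero => rw [hk1] at h; simp at h
        | succ k' =>
          rw [hk1, List.replicate_succ, List.flatten_cons] at h
          simp at h
      · refine ⟨k, hk, Or.inl ?_⟩
        rw [h, ← List.cons_append, rotL, List.append_assoc]
        have : ([(true,1)] ++ [((false : Bool), (-1 : ℤ))]) = [((true : Bool), (1:ℤ)), (false, -1)] := rfl
        rw [this, flatten_rep_succ]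
        have hkk : k - 1 + 1 = k := by omega
        rw [hkk]
    · have hu : u = (true, 1) := by
        rw [Prod.ext_iff]
        constructor
        · revert hgen; cases u.1 <;> simp
        · simpa using hfl
      obtain ⟨k, hk, hform⟩ := ih u hg.tail hf.tail (Or.inl hu)
      rcases hform with h | h | h | h
      · refine ⟨k + 1, by omega, Or.inr (Or.inr (Or.inr ?_))⟩
        simp only [Nat.add_sub_cancel]
        rw [h, rotL]
      · exfalso
        rw [hu] at h
        cases k with
        | zero => omega
        | succ k' =>
          rw [List.replicate_succ, List.flatten_cons] at h
          simp at h
      · refine ⟨k, hk, Or.inr (Or.inl ?_)⟩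
        rw [h, ← List.cons_append, rotL, List.append_assoc]
        have : ([((false : Bool), (-1 : ℤ))] ++ [((true : Bool), (1 : ℤ))]) = [((false : Bool), (-1:ℤ)), (true, 1)] := rfl
        rw [this, flatten_rep_succ]
        have hkk : k - 1 + 1 = k := by omega
        rw [hkk]
      · exfalso
        rw [hu] at h
        cases hk1 : k - 1 with
        | zero => rw [hk1] at h; simp at h
        | succ k' =>
          rw [hk1, List.replicate_succ, List.flatten_cons] at h
          simp at h

lemma lastClass : ∀ (t : List (Bool × ℤ)) (s : Bool × ℤ),
    (s :: t).Chain' (fun p q => p.1 ≠ q.1) →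
    (s :: t).Chain' (fun p q => q.2 = -p.2) →
    (s = (true, -1) ∨ s = (false, 1)) →
    ((s :: t).getLast (by simp) = (true, -1) ∨ (s :: t).getLast (by simp) = (false, 1)) := by
  intro t
  induction t with
  | nil => intro s _ _ hs; simpa using hs
  | cons u t' ih =>
    intro s hg hf hs
    have hgen : s.1 ≠ u.1 := (List.isChain_cons.mp hg).1 u rfl
    have hfl : u.2 = -s.2 := (List.isChain_cons.mp hf).1 u rfl
    have hu : u = (true, -1) ∨ u = (false, 1) := by
      rcases hs with rfl | rfl
      · refine Or.inr ?_
        rw [Prod.ext_iff]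
        exact ⟨by revert hgen; cases u.1 <;> simp, by simpa using hfl⟩
      · refine Or.inl ?_
        rw [Prod.ext_iff]
        exact ⟨by revert hgen; cases u.1 <;> simp, by simpa using hfl⟩
    rw [List.getLast_cons (by simp : (u :: t') ≠ [])]
    exact ih u hg.tail hf.tail hu

lemma wordInv_eq_cons (u : List (Bool × ℤ)) (h : u ≠ []) :
    wordInv u = ((u.getLast h).1, -(u.getLast h).2) :: wordInv u.dropLast := by
  unfold wordInv
  conv_lhs => rw [← List.dropLast_append_getLast h]
  rw [List.map_append, List.reverse_append]
  simp

lemma wordInv_gens {u : List (Bool × ℤ)} (h : u.Chain' (fun p q => p.1 ≠ q.1)) :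
    (wordInv u).Chain' (fun p q => p.1 ≠ q.1) := by
  unfold wordInv
  show List.IsChain _ _
  rw [List.isChain_reverse, List.isChain_map]
  exact h.imp fun _ _ hh => by simpa [flip] using hh.symm

lemma wordInv_flip {u : List (Bool × ℤ)} (h : u.Chain' (fun p q => q.2 = -p.2)) :
    (wordInv u).Chain' (fun p q => q.2 = -p.2) := by
  unfold wordInv
  show List.IsChain _ _
  rw [List.isChain_reverse, List.isChain_map]
  exact h.imp fun _ _ hh => by simp [flip]; omega

lemma flip_mem_setB (t : List (Bool × ℤ)) (s : Bool × ℤ)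
    (hg : (s :: t).Chain' (fun p q => p.1 ≠ q.1))
    (hpm : ∀ x ∈ s :: t, x.2 = 1 ∨ x.2 = -1)
    (hf : (s :: t).Chain' (fun p q => q.2 = -p.2)) :
    (s :: t) ∈ setB ∨ wordInv (s :: t) ∈ setB := by
  have hs2 := hpm s (by simp)
  have hsplit : (s = (true, 1) ∨ s = (false, -1)) ∨ (s = (true, -1) ∨ s = (false, 1)) := by
    rcases hs2 with h | h <;> cases hb : s.1
    · exact Or.inr (Or.inr (by rw [Prod.ext_iff]; exact ⟨hb, h⟩))
    · exact Or.inl (Or.inl (by rw [Prod.ext_iff]; exact ⟨hb, h⟩))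
    · exact Or.inl (Or.inr (by rw [Prod.ext_iff]; exact ⟨hb, h⟩))
    · exact Or.inr (Or.inl (by rw [Prod.ext_iff]; exact ⟨hb, h⟩))
  rcases hsplit with hgood | hbad
  · exact Or.inl (L2 t s hg hf hgood)
  · right
    have hlast := lastClass t s hg hf hbad
    have hne : (s :: t) ≠ [] := by simp
    have hcons := wordInv_eq_cons (s :: t) hne
    have hheadclass : (((s :: t).getLast hne).1, -((s :: t).getLast hne).2) = ((true : Bool), (1 : ℤ))
        ∨ (((s :: t).getLast hne).1, -((s :: t).getLast hne).2) = ((false : Bool), (-1 : ℤ)) := by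
      rcases hlast with h | h <;> rw [h] <;> simp
    have hg' := wordInv_gens hg
    have hf' := wordInv_flip hf
    rw [hcons] at hg' hf' ⊢
    exact L2 _ _ hg' hf' hheadclass

lemma reduceSame {H : Type*} [Group H] (a b : H) (w : List (Bool × ℤ)) (hw : w ≠ [])
    (hred : IsReducedWord w) (hrel : evalW a b w = 1) :
    ∃ v : List (Bool × ℤ), v ≠ [] ∧ IsReducedWord v ∧ evalW a b v = 1 ∧
      (∀ hv : v ≠ [], (v.head hv).1 = (v.getLast hv).1) ∧
      (∀ u, u <:+: v → u ≠ [] → (∀ s ∈ u, s.2 = 1 ∨ s.2 = -1) → u <:+: w) := by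
  by_cases hsame : (w.head hw).1 = (w.getLast hw).1
  · exact ⟨w, hw, hred, hrel, fun _ => hsame, fun u hu _ _ => hu⟩
  · obtain ⟨s, t, rfl⟩ : ∃ s t, w = s :: t := by
      cases w with
      | nil => exact absurd rfl hw
      | cons s t => exact ⟨s, t, rfl⟩
    have ht : t ≠ [] := by
      rintro rfl
      exact hsame rfl
    set k : ℤ := 2 + |s.2| with hkdef
    have hk2 : 2 ≤ k := by have := abs_nonneg s.2; omega
    have hks : 2 ≤ k + s.2 := by
      have h1 := neg_abs_le s.2
      omega
    set c : Bool × ℤ := (s.1, k + s.2) with hcdef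
    set d : Bool × ℤ := (s.1, -k) with hddef
    refine ⟨c :: (t ++ [d]), by simp, ⟨?_, ?_⟩, ?_, ?_, ?_⟩
    · -- chain of generators
      refine List.isChain_cons.mpr ⟨?_, ?_⟩
      · intro y hy
        rw [List.head?_append_of_ne_nil _ ht, List.head?_eq_head ht] at hy
        have := (List.isChain_cons.mp hred.1).1 (t.head ht)
          (by rw [List.head?_eq_head ht]; rfl)
        rw [← Option.some_inj.mp hy]
        exact this
      · refine List.isChain_append.mpr ⟨hred.1.tail, List.isChain_singleton _, ?_⟩
        intro x hx y hy
        rw [List.getLast?_eq_getLast_of_ne_nil ht] at hx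
        simp only [List.head?_cons, Option.mem_def, Option.some_inj] at hy
        rw [← Option.some_inj.mp hx, ← hy]
        have : ((s :: t).getLast hw).1 = (t.getLast ht).1 := by
          rw [List.getLast_cons ht]
        intro hcon
        apply hsame
        rw [List.head_cons, this, ← hcon]
    · -- exponents nonzero
      intro x hx
      rcases List.mem_cons.mp hx with rfl | hx
      · simp only [hcdef]; omega
      · rcases List.mem_append.mp hx with hx | hx
        · exact hred.2 x (List.mem_cons_of_mem _ hx)
        · rw [List.mem_singleton.mp hx]; simp only [hddef]; omega
    · -- evaluates to 1
      have h1 : evalW a b t = (if s.1 then a else b) ^ (-s.2) := by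
        rw [evalW_cons] at hrel
        rw [zpow_neg]
        exact eq_inv_of_mul_eq_one_right hrel
      simp only [hcdef, hddef]
      rw [evalW_cons, evalW_append, h1]
      have hd1 : evalW a b [((s.1 : Bool), -k)] = (if s.1 = true then a else b) ^ (-k) := by
        simp [evalW]
      rw [hd1]
      group
    · intro hv
      simp only [List.head_cons]
      rw [List.getLast_cons (by simp : t ++ [d] ≠ []), List.getLast_append_singleton]
    · -- infix transfer
      intro u hu hune hupm
      have hcu : c ∉ u := by
        intro hmem
        have := hupm c hmem
        simp only [hcdef] at this
        omega
      have hdu : d ∉ u := by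
        intro hmem
        have := hupm d hmem
        simp only [hddef] at this
        omega
      rcases List.infix_cons_iff.mp hu with hpre | hinf
      · exfalso
        obtain ⟨r, hr⟩ := hpre
        cases u with
        | nil => exact hune rfl
        | cons u0 u' =>
          apply hcu
          have : u0 = c := by
            have := congrArg (·.head?) hr
            simpa using this
          simp [this]
      · have : u.reverse <:+: d :: t.reverse := by
          have h2 : (t ++ [d]).reverse = d :: t.reverse := by simp
          rw [← h2]
          exact List.reverse_infix.mpr hinf
        rcases List.infix_cons_iff.mp this with hpre | hinf2
        · exfalso
          obtain ⟨r, hr⟩ := hpre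
          cases hu0 : u.reverse with
          | nil => exact hune (by simpa using hu0)
          | cons u0 u' =>
            apply hdu
            rw [hu0] at hr
            have : u0 = d := by
              have := congrArg (·.head?) hr
              simpa using this
            have hmem : u0 ∈ u.reverse := by rw [hu0]; simp
            rw [List.mem_reverse] at hmem
            rwa [‹u0 = d›] at hmem
        · have : u <:+: t := by
            have := List.reverse_infix.mpr hinf2
            simpa using this
          exact this.trans ⟨[s], [], by simp⟩

lemma setB_ne {u : List (Bool × ℤ)} (h : u ∈ setB) : u ≠ [] := by
  obtain ⟨k, hk, h | h | h | h⟩ := h <;> subst h <;>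
    first
      | (cases k with
          | zero => omega
          | succ k' => rw [List.replicate_succ, List.flatten_cons]; simp)
      | simp

lemma mem_flatten_replicate {α : Type*} {s : α} {k : ℕ} {l : List α}
    (h : s ∈ (List.replicate k l).flatten) : s ∈ l := by
  rw [List.mem_flatten] at h
  obtain ⟨m, hm, hs⟩ := h
  rw [List.eq_of_mem_replicate hm] at hs
  exact hs

lemma setB_pm {u : List (Bool × ℤ)} (h : u ∈ setB) : ∀ s ∈ u, s.2 = 1 ∨ s.2 = -1 := by
  obtain ⟨k, hk, h | h | h | h⟩ := h <;> subst h <;> intro s hs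
  · have := mem_flatten_replicate hs
    simp only [List.mem_cons, List.not_mem_nil, or_false] at this
    rcases this with rfl | rfl <;> simp
  · have := mem_flatten_replicate hs
    simp only [List.mem_cons, List.not_mem_nil, or_false] at this
    rcases this with rfl | rfl <;> simp
  · rcases List.mem_append.mp hs with hs1 | hs1
    · have := mem_flatten_replicate hs1
      simp only [List.mem_cons, List.not_mem_nil, or_false] at this
      rcases this with rfl | rfl <;> simp
    · simp only [List.mem_singleton] at hs1; subst hs1; simp
  · rcases List.mem_append.mp hs with hs1 | hs1
    · have := mem_flatten_replicate hs1
      simp only [List.mem_cons, List.not_mem_nil, or_false] at this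
      rcases this with rfl | rfl <;> simp
    · simp only [List.mem_singleton] at hs1; subst hs1; simp

lemma classB_ne {u : List (Bool × ℤ)} (h : u ∈ setB ∨ wordInv u ∈ setB) : u ≠ [] := by
  rcases h with h | h
  · exact setB_ne h
  · intro hu
    subst hu
    exact setB_ne h rfl

lemma classB_pm {u : List (Bool × ℤ)} (h : u ∈ setB ∨ wordInv u ∈ setB) :
    ∀ s ∈ u, s.2 = 1 ∨ s.2 = -1 := by
  rcases h with h | h
  · exact setB_pm h
  · intro s hs
    have : (s.1, -s.2) ∈ wordInv u := by
      unfold wordInv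
      rw [List.mem_reverse, List.mem_map]
      exact ⟨s, hs, rfl⟩
    have := setB_pm h _ this
    simp only at this
    omega

lemma part1Con {H X : Type*} [Group H] [MulAction H X] (a b : H)
    (X₁ X₂ K₁ K₂ : Set X) (hdisj : Disjoint X₁ X₂)
    (hK₁ : K₁.Nonempty) (hK₂ : K₂.Nonempty) (hK₁X : K₁ ⊆ X₁) (hK₂X : K₂ ⊆ X₂)
    (hpow : ∀ n : ℤ, 2 ≤ |n| →
      memW a b X₁ X₂ K₁ K₂ [(true, n)] ∧ memW a b X₁ X₂ K₁ K₂ [(false, n)])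
    (w : List (Bool × ℤ)) (hw : w ≠ []) (hred : IsReducedWord w)
    (hrel : evalW a b w = 1)
    (hA : ∀ u, u <:+: w → u ≠ [] → IsReducedWord u → (∀ s ∈ u, s.2 = 1 ∨ s.2 = -1) →
      memW a b K₁ K₂ X₁ X₂ u) : False := by
  obtain ⟨v, hvne, hvred, hvrel, hvsame, htrans⟩ := reduceSame a b w hw hred hrel
  obtain ⟨bs, hbs, hflat, hbne, hchain, hspec⟩ := exist1 v hvne hvred.2
  have hmem : ∀ q ∈ bs, if q.2 then memW a b X₁ X₂ K₁ K₂ q.1 else memW a b K₁ K₂ X₁ X₂ q.1 := by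
    intro q hq
    have hinf : q.1 <:+: v := hflat ▸ List.infix_of_mem_flatten (List.mem_map_of_mem (f := Prod.fst) hq)
    cases hq2 : q.2 <;> simp only [if_true, if_false, Bool.false_eq_true]
    · have hpm := (hspec q hq).2 hq2
      exact hA q.1 (htrans _ hinf (hbne q hq) hpm) (hbne q hq) (hvred.infix hinf) hpm
    · obtain ⟨g, m, hq1, hm⟩ := (hspec q hq).1 hq2
      rcases hpow m hm with ⟨hpa, hpb⟩
      cases g
      · rw [hq1]; exact hpb
      · rw [hq1]; exact hpa
  rcases bs with _ | ⟨p, bs'⟩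
  · exact absurd rfl hbs
  have hT := typeL a b X₁ X₂ K₁ K₂ hK₁X hK₂X bs' p hbne (hflat ▸ hvred) hmem hchain
    ((p :: bs').getLast (by simp)) (v.head hvne) (v.getLast hvne)
    (List.getLast?_eq_getLast_of_ne_nil (by simp))
    (by rw [hflat]; exact List.head?_eq_head hvne)
    (by rw [hflat]; exact List.getLast?_eq_getLast_of_ne_nil hvne)
  rw [hflat, hvrel, one_smul] at hT
  have hgl : (v.getLast hvne).1 = (v.head hvne).1 := (hvsame hvne).symm
  rw [hgl] at hT
  cases hgf : (v.head hvne).1 <;> rw [hgf] at hT <;>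
    cases hpo : ((p :: bs').getLast (by simp)).2 <;>
    cases hpt : p.2 <;> rw [hpo, hpt] at hT <;>
    simp only [srcS, tgtS, if_true, if_false, Bool.false_eq_true] at hT
  · obtain ⟨x, hx⟩ := hK₂
    exact absurd (hK₂X hx) (Set.disjoint_left.mp hdisj (hT hx))
  · obtain ⟨x, hx⟩ := hK₂
    exact absurd (hK₂X hx) (Set.disjoint_left.mp hdisj (hK₁X (hT hx)))
  · obtain ⟨x, hx⟩ := hK₂
    exact absurd (hK₂X hx) (Set.disjoint_left.mp hdisj (hT (hK₂X hx)))
  · obtain ⟨x, hx⟩ := hK₂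
    exact absurd (hK₂X hx) (Set.disjoint_left.mp hdisj (hK₁X (hT (hK₂X hx))))
  · obtain ⟨x, hx⟩ := hK₁
    exact absurd (Set.disjoint_left.mp hdisj (hK₁X hx)) (fun h => h (hT hx))
  · obtain ⟨x, hx⟩ := hK₁
    exact absurd (Set.disjoint_left.mp hdisj (hK₁X hx)) (fun h => h (hK₂X (hT hx)))
  · obtain ⟨x, hx⟩ := hK₁
    exact absurd (Set.disjoint_left.mp hdisj (hK₁X hx)) (fun h => h (hT (hK₁X hx)))
  · obtain ⟨x, hx⟩ := hK₁
    exact absurd (Set.disjoint_left.mp hdisj (hK₁X hx)) (fun h => h (hK₂X (hT (hK₁X hx))))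

lemma part2Con {H X : Type*} [Group H] [MulAction H X] (a b : H)
    (X₁ X₂ K₁ K₂ : Set X) (hdisj : Disjoint X₁ X₂)
    (hK₁ : K₁.Nonempty) (hK₂ : K₂.Nonempty) (hK₁X : K₁ ⊆ X₁) (hK₂X : K₂ ⊆ X₂)
    (hpow : ∀ n : ℤ, 2 ≤ |n| →
      memW a b X₁ X₂ K₁ K₂ [(true, n)] ∧ memW a b X₁ X₂ K₁ K₂ [(false, n)])
    (hp1 : memW a b X₁ X₂ K₁ K₂ [(true, 1), (false, 1)])
    (hp2 : memW a b X₁ X₂ K₁ K₂ [(false, -1), (true, -1)])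
    (hp3 : memW a b X₁ X₂ K₁ K₂ [(false, 1), (true, 1)])
    (hp4 : memW a b X₁ X₂ K₁ K₂ [(true, -1), (false, -1)])
    (w : List (Bool × ℤ)) (hw : w ≠ []) (hred : IsReducedWord w)
    (hrel : evalW a b w = 1)
    (hB : ∀ u, u <:+: w → (u ∈ setB ∨ wordInv u ∈ setB) → memW a b K₁ K₂ X₁ X₂ u) :
    False := by
  obtain ⟨v, hvne, hvred, hvrel, hvsame, htrans⟩ := reduceSame a b w hw hred hrel
  obtain ⟨bs, hbs, hflat, hbne, hchain, hspec⟩ := exist2 v.length v le_rfl hvne hvred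
  have hmem : ∀ q ∈ bs, if q.2 then memW a b X₁ X₂ K₁ K₂ q.1 else memW a b K₁ K₂ X₁ X₂ q.1 := by
    intro q hq
    have hinf : q.1 <:+: v := hflat ▸ List.infix_of_mem_flatten (List.mem_map_of_mem (f := Prod.fst) hq)
    cases hq2 : q.2 <;> simp only [if_true, if_false, Bool.false_eq_true]
    · obtain ⟨hpm, hflip⟩ := (hspec q hq).2 hq2
      obtain ⟨s, t, hq1⟩ : ∃ s t, q.1 = s :: t := by
        rcases hqe : q.1 with _ | ⟨s, t⟩
        · exact absurd hqe (hbne q hq)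
        · exact ⟨s, t, rfl⟩
      have hgens := (hvred.infix hinf).1
      rw [hq1] at hgens hpm hflip
      have hclass := flip_mem_setB t s hgens hpm hflip
      rw [← hq1] at hclass
      exact hB q.1 (htrans _ hinf (hbne q hq) ((hspec q hq).2 hq2).1) hclass
    · rcases (hspec q hq).1 hq2 with ⟨g, m, hq1, hm⟩ | ⟨g, e, hq1, he⟩
      · rcases hpow m hm with ⟨hpa, hpb⟩
        cases g
        · rw [hq1]; exact hpb
        · rw [hq1]; exact hpa
      · rcases he with rfl | rfl <;> cases g
        · rw [hq1]; exact hp3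
        · rw [hq1]; exact hp1
        · rw [hq1]; exact hp2
        · rw [hq1]; exact hp4
  rcases bs with _ | ⟨p, bs'⟩
  · exact absurd rfl hbs
  have hT := typeL a b X₁ X₂ K₁ K₂ hK₁X hK₂X bs' p hbne (hflat ▸ hvred) hmem hchain
    ((p :: bs').getLast (by simp)) (v.head hvne) (v.getLast hvne)
    (List.getLast?_eq_getLast_of_ne_nil (by simp))
    (by rw [hflat]; exact List.head?_eq_head hvne)
    (by rw [hflat]; exact List.getLast?_eq_getLast_of_ne_nil hvne)
  rw [hflat, hvrel, one_smul] at hT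
  have hgl : (v.getLast hvne).1 = (v.head hvne).1 := (hvsame hvne).symm
  rw [hgl] at hT
  cases hgf : (v.head hvne).1 <;> rw [hgf] at hT <;>
    cases hpo : ((p :: bs').getLast (by simp)).2 <;>
    cases hpt : p.2 <;> rw [hpo, hpt] at hT <;>
    simp only [srcS, tgtS, if_true, if_false, Bool.false_eq_true] at hT
  · obtain ⟨x, hx⟩ := hK₂
    exact absurd (hK₂X hx) (Set.disjoint_left.mp hdisj (hT hx))
  · obtain ⟨x, hx⟩ := hK₂
    exact absurd (hK₂X hx) (Set.disjoint_left.mp hdisj (hK₁X (hT hx)))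
  · obtain ⟨x, hx⟩ := hK₂
    exact absurd (hK₂X hx) (Set.disjoint_left.mp hdisj (hT (hK₂X hx)))
  · obtain ⟨x, hx⟩ := hK₂
    exact absurd (hK₂X hx) (Set.disjoint_left.mp hdisj (hK₁X (hT (hK₂X hx))))
  · obtain ⟨x, hx⟩ := hK₁
    exact absurd (Set.disjoint_left.mp hdisj (hK₁X hx)) (fun h => h (hT hx))
  · obtain ⟨x, hx⟩ := hK₁
    exact absurd (Set.disjoint_left.mp hdisj (hK₁X hx)) (fun h => h (hK₂X (hT hx)))
  · obtain ⟨x, hx⟩ := hK₁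
    exact absurd (Set.disjoint_left.mp hdisj (hK₁X hx)) (fun h => h (hT (hK₁X hx)))
  · obtain ⟨x, hx⟩ := hK₁
    exact absurd (Set.disjoint_left.mp hdisj (hK₁X hx)) (fun h => h (hK₂X (hT (hK₁X hx))))


/-- with the ping-pong setup, if `ā^n, b̄^n ∈ W_{X→K}` for all `|n| ≥ 2`,
then every relator of `H` has an exact subword in `𝒜 \ W_{K→X}`; if furthermore
`(āb̄)^{±1}, (b̄ā)^{±1} ∈ W_{X→K}`, then every relator of `H` has an exact subword in
`(ℬ ∪ ℬ⁻¹) \ W_{K→X}`. -/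
theorem stmt_15 {H X : Type*} [Group H] [MulAction H X] (a b : H)
    (X₁ X₂ K₁ K₂ : Set X) (hdisj : Disjoint X₁ X₂)
    (hK₁ : K₁.Nonempty) (hK₂ : K₂.Nonempty) (hK₁X : K₁ ⊆ X₁) (hK₂X : K₂ ⊆ X₂)
    (hpow : ∀ n : ℤ, 2 ≤ |n| →
      memW a b X₁ X₂ K₁ K₂ [(true, n)] ∧ memW a b X₁ X₂ K₁ K₂ [(false, n)])
    (w : List (Bool × ℤ)) (hw : w ≠ []) (hred : IsReducedWord w)
    (hrel : evalW a b w = 1) :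
    (∃ u : List (Bool × ℤ), u <:+: w ∧ u ∈ setA ∧ ¬ memW a b K₁ K₂ X₁ X₂ u) ∧
    ((memW a b X₁ X₂ K₁ K₂ [(true, 1), (false, 1)] ∧
      memW a b X₁ X₂ K₁ K₂ [(false, -1), (true, -1)] ∧
      memW a b X₁ X₂ K₁ K₂ [(false, 1), (true, 1)] ∧
      memW a b X₁ X₂ K₁ K₂ [(true, -1), (false, -1)]) →
      ∃ u : List (Bool × ℤ), u <:+: w ∧
        (u ∈ setB ∨ wordInv u ∈ setB) ∧ ¬ memW a b K₁ K₂ X₁ X₂ u) := by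
  constructor
  · by_contra hno
    push_neg at hno
    exact part1Con a b X₁ X₂ K₁ K₂ hdisj hK₁ hK₂ hK₁X hK₂X hpow w hw hred hrel
      (fun u hu hne hured hpm => hno u hu ⟨hne, hured, hpm⟩)
  · rintro ⟨hp1, hp2, hp3, hp4⟩
    by_contra hno
    push_neg at hno
    exact part2Con a b X₁ X₂ K₁ K₂ hdisj hK₁ hK₂ hK₁X hK₂X hpow hp1 hp2 hp3 hp4 w hw hred hrel
      (fun u hu hcl => hno u hu hcl)
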